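/- The function f₄(y) = log(y)³ − 12·Li₃(−y) + 6·log(y)·Li₂(−y), where Li_k(z) = Σ_{p≥1} z^p/p^k, satisfies the fourth-order ODE y³(y+1)f⁗ + y²(6+8y)f‴ + y(7+14y)f″ + (1+4y)f′ = 0 for 0 < y < 1. -/

import Mathlib

noncomputable def polylog (k : ℕ) (z : ℝ) : ℝ :=
  ∑' p : ℕ, z ^ (p + 1) / ((p : ℝ) + 1) ^ k

open Real Set Filter

lemma one_le_abs_nat (p k : ℕ) : (1:ℝ) ≤ |(p:ℝ) + 1| ^ k := by
  apply one_le_pow₀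
  rw [abs_of_pos (by positivity : (0:ℝ) < (p:ℝ) + 1)]
  exact le_add_of_nonneg_left (Nat.cast_nonneg p)

lemma polylog_summable (k : ℕ) {z : ℝ} (hz : |z| < 1) :
    Summable (fun p : ℕ => z ^ (p + 1) / ((p : ℝ) + 1) ^ k) := by
  apply Summable.of_norm_bounded (g := fun p => |z| ^ (p + 1))
  · exact ((summable_geometric_of_lt_one (abs_nonneg z) hz).mul_left |z|).congr
      (fun p => (pow_succ' |z| p).symm)
  · intro p
    rw [norm_div, norm_pow, norm_pow, Real.norm_eq_abs, Real.norm_eq_abs]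
    exact div_le_self (by positivity) (one_le_abs_nat p k)

lemma hasDerivAt_polylog (k : ℕ) {z : ℝ} (hz : |z| < 1) :
    HasDerivAt (polylog (k + 1)) (∑' p : ℕ, z ^ p / ((p : ℝ) + 1) ^ k) z := by
  set r : ℝ := (|z| + 1) / 2 with hr
  have hr1 : r < 1 := by simp only [hr]; linarith
  have hzr : |z| < r := by simp only [hr]; linarith
  have hr0 : 0 < r := lt_of_le_of_lt (abs_nonneg z) hzr
  have key := hasDerivAt_tsum_of_isPreconnected
    (u := fun p : ℕ => r ^ p)
    (g := fun (p : ℕ) (y : ℝ) => y ^ (p + 1) / ((p : ℝ) + 1) ^ (k + 1))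
    (g' := fun (p : ℕ) (y : ℝ) => y ^ p / ((p : ℝ) + 1) ^ k)
    (t := Ioo (-r) r) (y₀ := 0) (y := z)
    (summable_geometric_of_lt_one hr0.le hr1) isOpen_Ioo isPreconnected_Ioo
    ?_ ?_ (mem_Ioo.2 ⟨by linarith, hr0⟩) (by simpa using summable_zero)
    (mem_Ioo.2 (abs_lt.1 hzr))
  · exact key
  · intro p y _
    have hp : ((p : ℝ) + 1) ≠ 0 := by positivity
    have := (hasDerivAt_pow (p + 1) y).div_const (((p : ℝ) + 1) ^ (k + 1))
    refine this.congr_deriv (Eq.symm ?_)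
    push_cast
    field_simp
    ring
  · intro p y hy
    have hy' : |y| ≤ r := by rw [abs_le]; exact ⟨hy.1.le, hy.2.le⟩
    rw [Real.norm_eq_abs, abs_div, abs_pow, abs_pow]
    calc |y| ^ p / |(p : ℝ) + 1| ^ k ≤ |y| ^ p :=
          div_le_self (by positivity) (one_le_abs_nat p k)
      _ ≤ r ^ p := pow_le_pow_left₀ (abs_nonneg y) hy' p

lemma abs_neg_lt_one {u : ℝ} (h0 : 0 < u) (h1 : u < 1) : |(-u)| < 1 := by
  rw [abs_neg, abs_of_pos h0]; exact h1

lemma hasDerivAt_polylog2_neg {u : ℝ} (h0 : 0 < u) (h1 : u < 1) :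
    HasDerivAt (fun x : ℝ => polylog 2 (-x)) (-(Real.log (1 + u)) / u) u := by
  have hz := abs_neg_lt_one h0 h1
  have hu : u ≠ 0 := h0.ne'
  have hnu : (-u : ℝ) ≠ 0 := neg_ne_zero.2 hu
  have hd := (hasDerivAt_polylog 1 hz).comp u (hasDerivAt_neg u)
  have hsum : HasSum (fun p : ℕ => (-u) ^ (p + 1) / ((p : ℝ) + 1)) (-Real.log (1 + u)) := by
    have := hasSum_pow_div_log_of_abs_lt_one hz
    rw [sub_neg_eq_add] at this
    exact this
  have hsum2 := hsum.mul_left (-u)⁻¹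
  have heq : (fun p : ℕ => (-u)⁻¹ * ((-u) ^ (p + 1) / ((p : ℝ) + 1)))
      = fun p : ℕ => (-u) ^ p / ((p : ℝ) + 1) ^ 1 := by
    funext p
    have hp : ((p : ℝ) + 1) ≠ 0 := by positivity
    rw [pow_one, pow_succ]
    field_simp
  rw [heq] at hsum2
  have htsum : (∑' p : ℕ, (-u) ^ p / ((p : ℝ) + 1) ^ 1) = (-u)⁻¹ * -Real.log (1 + u) :=
    hsum2.tsum_eq
  refine hd.congr_deriv (Eq.symm ?_)
  rw [htsum]
  field_simp
lemma hasDerivAt_polylog3_neg {u : ℝ} (h0 : 0 < u) (h1 : u < 1) :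
    HasDerivAt (fun x : ℝ => polylog 3 (-x)) (polylog 2 (-u) / u) u := by
  have hz := abs_neg_lt_one h0 h1
  have hu : u ≠ 0 := h0.ne'
  have hnu : (-u : ℝ) ≠ 0 := neg_ne_zero.2 hu
  have hd := (hasDerivAt_polylog 2 hz).comp u (hasDerivAt_neg u)
  have htsum : (∑' p : ℕ, (-u) ^ p / ((p : ℝ) + 1) ^ 2) = (-u)⁻¹ * polylog 2 (-u) := by
    rw [polylog, ← tsum_mul_left]
    congr 1
    funext p
    have hp : ((p : ℝ) + 1) ≠ 0 := by positivity
    rw [pow_succ (-u) p]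
    field_simp
  refine hd.congr_deriv (Eq.symm ?_)
  rw [htsum]
  field_simp

noncomputable def F1 (x : ℝ) : ℝ :=
  (3 * Real.log x ^ 2 - 6 * polylog 2 (-x) - 6 * (Real.log x * Real.log (1 + x))) / x

noncomputable def F2 (x : ℝ) : ℝ :=
  6 * Real.log x / (x ^ 2 * (1 + x))
    - (3 * Real.log x ^ 2 - 6 * polylog 2 (-x) - 6 * (Real.log x * Real.log (1 + x))) / x ^ 2

noncomputable def F3 (x : ℝ) : ℝ :=
  6 / (x ^ 3 * (1 + x)) - 6 * (Real.log x * (3 + 4 * x)) / (x ^ 3 * (1 + x) ^ 2)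
    + (6 * Real.log x ^ 2 - 12 * polylog 2 (-x) - 12 * (Real.log x * Real.log (1 + x))) / x ^ 3

noncomputable def F4 (x : ℝ) : ℝ :=
  -(12 * (3 + 4 * x)) / (x ^ 4 * (1 + x) ^ 2) - 24 * Real.log x / (x ^ 3 * (1 + x) ^ 2)
    + 6 * (Real.log x * ((3 + 4 * x) * (3 + 5 * x))) / (x ^ 4 * (1 + x) ^ 3)
    + 12 * Real.log x / (x ^ 4 * (1 + x))
    - 6 * (3 * Real.log x ^ 2 - 6 * polylog 2 (-x) - 6 * (Real.log x * Real.log (1 + x))) / x ^ 4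

section ladder
variable {x : ℝ} (h0 : 0 < x) (h1 : x < 1)

include h0

lemma hasDerivAt_log1p : HasDerivAt (fun x : ℝ => Real.log (1 + x)) ((1 + x)⁻¹) x := by
  have h := (Real.hasDerivAt_log (by linarith : (1:ℝ) + x ≠ 0)).comp x
    ((hasDerivAt_id x).const_add 1)
  exact h.congr_deriv (mul_one _)

include h1

lemma hasDerivAt_f0 :
    HasDerivAt (fun u : ℝ =>
      Real.log u ^ 3 - 12 * polylog 3 (-u) + 6 * Real.log u * polylog 2 (-u)) (F1 x) x := by
  have hlog := Real.hasDerivAt_log h0.ne'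
  have hD := hasDerivAt_polylog2_neg h0 h1
  have hT := hasDerivAt_polylog3_neg h0 h1
  have h := ((hlog.pow 3).sub (hT.const_mul 12)).add ((hlog.const_mul 6).mul hD)
  refine h.congr_deriv (Eq.symm ?_)
  rw [F1]
  have h1x : (1:ℝ) + x ≠ 0 := by linarith
  field_simp
  ring

lemma hasDerivAt_F1 : HasDerivAt F1 (F2 x) x := by
  have hlog := Real.hasDerivAt_log h0.ne'
  have hD := hasDerivAt_polylog2_neg h0 h1
  have hM := hasDerivAt_log1p h0
  have hnum := (((hlog.pow 2).const_mul 3).sub (hD.const_mul 6)).sub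
    ((hlog.mul hM).const_mul 6)
  have h := hnum.div (hasDerivAt_id x) h0.ne'
  have heq : F1 = fun y : ℝ =>
      (3 * Real.log y ^ 2 - 6 * polylog 2 (-y) - 6 * (Real.log y * Real.log (1 + y))) / y := rfl
  rw [heq]
  refine h.congr_deriv (Eq.symm ?_)
  rw [F2]
  simp only [Pi.sub_apply, Pi.add_apply, Pi.mul_apply, Pi.pow_apply, Pi.div_apply, id_eq]
  have h1x : (1:ℝ) + x ≠ 0 := by linarith
  field_simp
  ring

lemma hasDerivAt_F2 : HasDerivAt F2 (F3 x) x := by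
  have hlog := Real.hasDerivAt_log h0.ne'
  have hD := hasDerivAt_polylog2_neg h0 h1
  have hM := hasDerivAt_log1p h0
  have h1x : (1:ℝ) + x ≠ 0 := by linarith
  have hden1 : HasDerivAt (fun y : ℝ => y ^ 2 * (1 + y))
      (2 * x ^ 1 * (1 + x) + x ^ 2 * 1) x :=
    (hasDerivAt_pow 2 x).mul ((hasDerivAt_id x).const_add 1)
  have ht1 := (hlog.const_mul 6).div hden1 (by positivity)
  have hnum := (((hlog.pow 2).const_mul 3).sub (hD.const_mul 6)).sub
    ((hlog.mul hM).const_mul 6)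
  have ht2 := hnum.div (hasDerivAt_pow 2 x) (by positivity)
  have h := ht1.sub ht2
  have heq : F2 = fun y : ℝ => 6 * Real.log y / (y ^ 2 * (1 + y))
      - (3 * Real.log y ^ 2 - 6 * polylog 2 (-y) - 6 * (Real.log y * Real.log (1 + y))) / y ^ 2 :=
    rfl
  rw [heq]
  refine h.congr_deriv (Eq.symm ?_)
  rw [F3]
  simp only [Pi.sub_apply, Pi.add_apply, Pi.mul_apply, Pi.pow_apply, Pi.div_apply, id_eq]
  field_simp
  ring

lemma hasDerivAt_F3 : HasDerivAt F3 (F4 x) x := by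
  have hlog := Real.hasDerivAt_log h0.ne'
  have hD := hasDerivAt_polylog2_neg h0 h1
  have hM := hasDerivAt_log1p h0
  have h1x : (1:ℝ) + x ≠ 0 := by linarith
  have h1x' : HasDerivAt (fun y : ℝ => 1 + y) 1 x := (hasDerivAt_id x).const_add 1
  have hden1 : HasDerivAt (fun y : ℝ => y ^ 3 * (1 + y))
      (3 * x ^ 2 * (1 + x) + x ^ 3 * 1) x := (hasDerivAt_pow 3 x).mul h1x'
  have hden2 : HasDerivAt (fun y : ℝ => y ^ 3 * (1 + y) ^ 2)
      (3 * x ^ 2 * (1 + x) ^ 2 + x ^ 3 * (2 * (1 + x) ^ 1 * 1)) x :=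
    (hasDerivAt_pow 3 x).mul (h1x'.pow 2)
  have hlin : HasDerivAt (fun y : ℝ => 3 + 4 * y) (4 * 1) x :=
    ((hasDerivAt_id x).const_mul 4).const_add 3
  have ht1 := (hasDerivAt_const x (6:ℝ)).div hden1 (by positivity)
  have ht2 := ((hlog.mul hlin).const_mul 6).div hden2 (by positivity)
  have hnum := (((hlog.pow 2).const_mul 6).sub (hD.const_mul 12)).sub
    ((hlog.mul hM).const_mul 12)
  have ht3 := hnum.div (hasDerivAt_pow 3 x) (by positivity)
  have h := (ht1.sub ht2).add ht3
  have heq : F3 = fun y : ℝ => 6 / (y ^ 3 * (1 + y))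
      - 6 * (Real.log y * (3 + 4 * y)) / (y ^ 3 * (1 + y) ^ 2)
      + (6 * Real.log y ^ 2 - 12 * polylog 2 (-y) - 12 * (Real.log y * Real.log (1 + y))) / y ^ 3 :=
    rfl
  rw [heq]
  refine h.congr_deriv (Eq.symm ?_)
  rw [F4]
  simp only [Pi.sub_apply, Pi.add_apply, Pi.mul_apply, Pi.pow_apply, Pi.div_apply, id_eq]
  field_simp
  ring

end ladder

theorem ladder_ode_solution_f4 :
    ∀ y : ℝ, 0 < y → y < 1 →
      letI f : ℝ → ℝ := fun u =>
        (Real.log u) ^ 3 - 12 * polylog 3 (-u) + 6 * Real.log u * polylog 2 (-u)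
      y ^ 3 * (y + 1) * iteratedDeriv 4 f y + y ^ 2 * (6 + 8 * y) * iteratedDeriv 3 f y
        + y * (7 + 14 * y) * iteratedDeriv 2 f y + (1 + 4 * y) * deriv f y = 0 := by
  intro y hy0 hy1
  set f : ℝ → ℝ := fun u =>
    (Real.log u) ^ 3 - 12 * polylog 3 (-u) + 6 * Real.log u * polylog 2 (-u) with hf
  have hmem : y ∈ Ioo (0:ℝ) 1 := ⟨hy0, hy1⟩
  have e1 : ∀ x ∈ Ioo (0:ℝ) 1, deriv f x = F1 x := fun x hx =>
    (hasDerivAt_f0 hx.1 hx.2).deriv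
  have e2 : ∀ x ∈ Ioo (0:ℝ) 1, iteratedDeriv 2 f x = F2 x := by
    intro x hx
    rw [show (2:ℕ) = 1 + 1 from rfl, iteratedDeriv_succ, iteratedDeriv_one]
    have hev : deriv f =ᶠ[nhds x] F1 :=
      eventually_of_mem (isOpen_Ioo.mem_nhds hx) (fun z hz => e1 z hz)
    rw [hev.deriv_eq]
    exact (hasDerivAt_F1 hx.1 hx.2).deriv
  have e3 : ∀ x ∈ Ioo (0:ℝ) 1, iteratedDeriv 3 f x = F3 x := by
    intro x hx
    rw [show (3:ℕ) = 2 + 1 from rfl, iteratedDeriv_succ]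
    have hev : iteratedDeriv 2 f =ᶠ[nhds x] F2 :=
      eventually_of_mem (isOpen_Ioo.mem_nhds hx) (fun z hz => e2 z hz)
    rw [hev.deriv_eq]
    exact (hasDerivAt_F2 hx.1 hx.2).deriv
  have e4 : ∀ x ∈ Ioo (0:ℝ) 1, iteratedDeriv 4 f x = F4 x := by
    intro x hx
    rw [show (4:ℕ) = 3 + 1 from rfl, iteratedDeriv_succ]
    have hev : iteratedDeriv 3 f =ᶠ[nhds x] F3 :=
      eventually_of_mem (isOpen_Ioo.mem_nhds hx) (fun z hz => e3 z hz)
    rw [hev.deriv_eq]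
    exact (hasDerivAt_F3 hx.1 hx.2).deriv
  rw [e1 y hmem, e2 y hmem, e3 y hmem, e4 y hmem, F1, F2, F3, F4]
  have hy : y ≠ 0 := hy0.ne'
  have h1y : (1:ℝ) + y ≠ 0 := by linarith
  field_simp
  ring
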